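/- Let V be a finite-dimensional real inner product space, g ⊆ so(V) a Lie subalgebra, and V = V₁ ⊕ ⋯ ⊕ V_k an orthogonal direct sum decomposition into g-invariant subspaces, each of which is irreducible as a g-module. For each i let gᵢ := {A ∈ g : A|_{V_j} = 0 for all j ≠ i}, regarded via restriction as a Lie subalgebra of so(Vᵢ). Then K(g) is the internal direct sum over i of the extensions to V of the spaces K(gᵢ): every algebraic curvature tensor R on V with values in g decomposes uniquely as R = R₁ + ⋯ + R_k, where Rᵢ is the extension of an algebraic curvature tensor on Vᵢ with values in gᵢ. -/

import Mathlib

open scoped RealInnerProductSpace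

noncomputable section

attribute [local instance 100] LieRing.ofAssociativeRing

/-- The first Bianchi identity `b₁ R = 0` for an alternating bilinear map
`R : V × V → End V`. -/
def FirstBianchi {V : Type*} [NormedAddCommGroup V] [InnerProductSpace ℝ V]
    (R : V →ₗ[ℝ] V →ₗ[ℝ] Module.End ℝ V) : Prop :=
  ∀ X Y Z : V, R X Y Z + R Y Z X + R Z X Y = 0

/-- `R` is an algebraic curvature tensor with values in the set `g ⊆ End V`:
an alternating bilinear map `V × V → g` satisfying the first Bianchi identity. -/
def IsAlgCurv {V : Type*} [NormedAddCommGroup V] [InnerProductSpace ℝ V]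
    (g : Set (Module.End ℝ V)) (R : V →ₗ[ℝ] V →ₗ[ℝ] Module.End ℝ V) : Prop :=
  (∀ X : V, R X X = 0) ∧ (∀ X Y : V, R X Y ∈ g) ∧ FirstBianchi R

/-- `R` is the extension to `V` of an algebraic curvature tensor on the subspace `V₁`
with values in `g`: it has values in `g` and factors through the orthogonal
projection onto `V₁` in both arguments. -/
def IsExtCurv {V : Type*} [NormedAddCommGroup V] [InnerProductSpace ℝ V]
    [FiniteDimensional ℝ V] (V₁ : Submodule ℝ V) (g : Set (Module.End ℝ V))
    (R : V →ₗ[ℝ] V →ₗ[ℝ] Module.End ℝ V) : Prop :=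
  IsAlgCurv g R ∧
    ∀ X Y : V, R X Y = R ((Submodule.orthogonalProjectionOnto V₁ X : V)) ((Submodule.orthogonalProjectionOnto V₁ Y : V))

/-- Let `g ⊆ so(V)` be a Lie subalgebra and `V = V₁ ⊕ ⋯ ⊕ V_k` an orthogonal
decomposition into irreducible `g`-invariant subspaces.  With
`gᵢ = {A ∈ g : A|_{V_j} = 0 for j ≠ i}`, the space `K(g)` is the internal direct sum
of the extensions of the spaces `K(gᵢ)`. -/
theorem curv_direct_sum_decomposition_of_irreducibles
    {V : Type*} [NormedAddCommGroup V] [InnerProductSpace ℝ V] [FiniteDimensional ℝ V]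
    {k : ℕ}
    (g : LieSubalgebra ℝ (Module.End ℝ V))
    (hskew : ∀ A ∈ g, ∀ x y : V, ⟪A x, y⟫ = -⟪x, A y⟫)
    (Vs : Fin k → Submodule ℝ V)
    (horth : ∀ i j, i ≠ j → ∀ x ∈ Vs i, ∀ y ∈ Vs j, ⟪x, y⟫ = 0)
    (hspan : (⨆ i, Vs i) = ⊤)
    (hinv : ∀ i, ∀ A ∈ g, ∀ x ∈ Vs i, A x ∈ Vs i)
    (hirr : ∀ i, Vs i ≠ ⊥ ∧
      ∀ U : Submodule ℝ V, U ≤ Vs i → (∀ A ∈ g, ∀ x ∈ U, A x ∈ U) → U = ⊥ ∨ U = Vs i) :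
    ∀ R : V →ₗ[ℝ] V →ₗ[ℝ] Module.End ℝ V,
      IsAlgCurv (↑g : Set (Module.End ℝ V)) R →
      ∃! Rs : Fin k → (V →ₗ[ℝ] V →ₗ[ℝ] Module.End ℝ V),
        (∀ i, IsExtCurv (Vs i)
          {A : Module.End ℝ V | A ∈ g ∧ ∀ j, j ≠ i → ∀ x ∈ Vs j, A x = 0} (Rs i)) ∧
        R = ∑ i, Rs i := by
  classical
  intro R hR
  obtain ⟨halt, hmem, hbia⟩ := hR
  -- antisymmetry of R
  have hA : ∀ X Y : V, R X Y = - R Y X := by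
    intro X Y
    have h0 := halt (X + Y)
    simp only [map_add, LinearMap.add_apply, halt X, halt Y, zero_add, add_zero] at h0
    exact eq_neg_of_add_eq_zero_right h0
  -- basic symmetries of the (4,0)-tensor
  have a1 : ∀ X Y Z W : V, ⟪R X Y Z, W⟫ = -⟪R Y X Z, W⟫ := by
    intro X Y Z W
    rw [hA X Y]
    simp [inner_neg_left]
  have a2 : ∀ X Y Z W : V, ⟪R X Y Z, W⟫ = -⟪R X Y W, Z⟫ := by
    intro X Y Z W
    rw [hskew (R X Y) (hmem X Y) Z W, real_inner_comm]
  have b : ∀ X Y Z W : V, ⟪R X Y Z, W⟫ + ⟪R Y Z X, W⟫ + ⟪R Z X Y, W⟫ = 0 := by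
    intro X Y Z W
    have h : ⟪R X Y Z + R Y Z X + R Z X Y, W⟫ = (0 : ℝ) := by
      rw [hbia X Y Z, inner_zero_left]
    rw [inner_add_left, inner_add_left] at h
    linarith
  -- pair symmetry
  have pairSym : ∀ X Y Z W : V, ⟪R X Y Z, W⟫ = ⟪R Z W X, Y⟫ := by
    intro X Y Z W
    linarith [b Y Z X W, b Z X W Y, b X W Y Z, b W Y Z X,
      a2 Y Z X W, a2 Z X Y W, a2 X W Z Y, a2 Z W Y X, a2 X Y W Z, a2 W Y X Z,
      a2 X Y Z W, a2 Z W X Y, a2 Y X W Z, a2 Y W X Z,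
      a1 W Z X Y, a1 Y X W Z, a1 X Y Z W, a1 Z W X Y, a1 Y Z X W, a1 W Y Z X,
      a1 X W Z Y, a1 W X Y Z]
  -- projections
  set P : Fin k → (V →ₗ[ℝ] V) :=
    fun i => (Vs i).subtype.comp (Submodule.orthogonalProjectionOnto (Vs i)).toLinearMap with hPdef
  have hPmem : ∀ i (x : V), P i x ∈ Vs i := fun i x => ((Submodule.orthogonalProjectionOnto (Vs i)) x).2
  have hPid : ∀ i, ∀ x ∈ Vs i, P i x = x := by
    intro i x hx
    simpa [P] using (Vs i).starProjection_eq_self_iff.mpr hx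
  have hPzero : ∀ i j, j ≠ i → ∀ x ∈ Vs j, P i x = 0 := by
    intro i j hj x hx
    have hxo : x ∈ (Vs i)ᗮ := by
      intro u hu
      exact horth i j (Ne.symm hj) u hu x hx
    simp [P, Submodule.orthogonalProjectionOnto_apply_of_mem_orthogonal hxo]
  have hsumP : ∀ x : V, ∑ i, P i x = x := by
    have hker : ∀ m, Vs m ≤ LinearMap.ker ((∑ i, P i) - LinearMap.id) := by
      intro m x hx
      simp only [LinearMap.mem_ker, LinearMap.sub_apply, LinearMap.id_apply,
        LinearMap.sum_apply, sub_eq_zero]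
      rw [Finset.sum_eq_single m]
      · exact hPid m x hx
      · intro j _ hj
        exact hPzero j m (fun h => hj h.symm) x hx
      · intro h
        exact absurd (Finset.mem_univ m) h
    have htop : (⊤ : Submodule ℝ V) ≤ LinearMap.ker ((∑ i, P i) - LinearMap.id) := by
      rw [← hspan]
      exact iSup_le hker
    intro x
    have hx := htop (Submodule.mem_top : x ∈ (⊤ : Submodule ℝ V))
    simp only [LinearMap.mem_ker, LinearMap.sub_apply, LinearMap.id_apply,
      LinearMap.sum_apply, sub_eq_zero] at hx
    exact hx
  -- mixed vanishing
  have hmix : ∀ i j, i ≠ j → ∀ x ∈ Vs i, ∀ y ∈ Vs j, R x y = 0 := by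
    intro i j hij x hx y hy
    apply LinearMap.ext
    intro Z
    have h1 : ⟪R x y Z, R x y Z⟫ = ⟪R Z (R x y Z) x, y⟫ := pairSym x y Z (R x y Z)
    have h2 : ⟪R Z (R x y Z) x, y⟫ = 0 :=
      horth i j hij _ (hinv i _ (hmem Z (R x y Z)) x hx) y hy
    simpa using inner_self_eq_zero.mp (h1.trans h2)
  -- values vanish on the other summands
  have hvan : ∀ i, ∀ x ∈ Vs i, ∀ y ∈ Vs i, ∀ j, j ≠ i → ∀ z ∈ Vs j, R x y z = 0 := by
    intro i x hx y hy j hj z hz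
    have hb := hbia x y z
    rw [hmix i j (fun h => hj h.symm) y hy z hz, hmix j i hj z hz x hx] at hb
    simpa using hb
  have hfact : ∀ i, ∀ x ∈ Vs i, ∀ y ∈ Vs i, ∀ Z : V, R x y Z = R x y (P i Z) := by
    intro i x hx y hy Z
    conv_lhs => rw [← hsumP Z]
    rw [map_sum, Finset.sum_eq_single i]
    · intro j _ hj
      exact hvan i x hx y hy j hj (P j Z) (hPmem j Z)
    · intro h
      exact absurd (Finset.mem_univ i) h
  set Rs : Fin k → (V →ₗ[ℝ] V →ₗ[ℝ] Module.End ℝ V) :=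
    fun i => R.compl₁₂ (P i) (P i) with hRsdef
  have hRsApp : ∀ i (X Y : V), Rs i X Y = R (P i X) (P i Y) := fun i X Y => rfl
  have hproj : ∀ i (X : V), ((Submodule.orthogonalProjectionOnto (Vs i) X : V)) = P i X := fun i X => rfl
  -- the key formula, also used for uniqueness
  have hkey : ∀ (Rs' : Fin k → (V →ₗ[ℝ] V →ₗ[ℝ] Module.End ℝ V)),
      (∀ i, IsExtCurv (Vs i)
        {A : Module.End ℝ V | A ∈ g ∧ ∀ j, j ≠ i → ∀ x ∈ Vs j, A x = 0} (Rs' i)) →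
      R = ∑ i, Rs' i → ∀ i (X Y : V), Rs' i X Y = R (P i X) (P i Y) := by
    intro Rs' h1 h2 i X Y
    have e1 : Rs' i X Y = Rs' i (P i X) (P i Y) := by
      rw [(h1 i).2 X Y, hproj, hproj]
    have e2 : R (P i X) (P i Y) = ∑ j, Rs' j (P i X) (P i Y) := by
      rw [h2]
      simp [LinearMap.sum_apply]
    rw [e1, e2, Finset.sum_eq_single i]
    · intro j _ hj
      rw [(h1 j).2 (P i X) (P i Y), hproj, hproj,
        hPzero j i (Ne.symm hj) _ (hPmem i X), hPzero j i (Ne.symm hj) _ (hPmem i Y)]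
      simp
    · intro h
      exact absurd (Finset.mem_univ i) h
  refine ⟨Rs, ⟨?_, ?_⟩, ?_⟩
  · intro i
    constructor
    · refine ⟨fun X => halt (P i X), fun X Y => ⟨hmem _ _, fun j hj z hz =>
        hvan i _ (hPmem i X) _ (hPmem i Y) j hj z hz⟩, ?_⟩
      intro X Y Z
      have e1 : Rs i X Y Z = R (P i X) (P i Y) (P i Z) :=
        hfact i _ (hPmem i X) _ (hPmem i Y) Z
      have e2 : Rs i Y Z X = R (P i Y) (P i Z) (P i X) :=
        hfact i _ (hPmem i Y) _ (hPmem i Z) X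
      have e3 : Rs i Z X Y = R (P i Z) (P i X) (P i Y) :=
        hfact i _ (hPmem i Z) _ (hPmem i X) Y
      rw [e1, e2, e3]
      exact hbia (P i X) (P i Y) (P i Z)
    · intro X Y
      rw [hproj, hproj, hRsApp, hRsApp, hPid i _ (hPmem i X), hPid i _ (hPmem i Y)]
  · apply LinearMap.ext
    intro X
    apply LinearMap.ext
    intro Y
    simp only [LinearMap.sum_apply]
    calc R X Y = R (∑ l, P l X) (∑ m, P m Y) := by rw [hsumP, hsumP]
      _ = ∑ l, ∑ m, R (P l X) (P m Y) := by
          simp only [map_sum, LinearMap.sum_apply]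
          rw [Finset.sum_comm]
      _ = ∑ l, R (P l X) (P l Y) := by
          refine Finset.sum_congr rfl fun l _ => ?_
          rw [Finset.sum_eq_single l]
          · intro m _ hm
            exact hmix l m (fun h => hm h.symm) _ (hPmem l X) _ (hPmem m Y)
          · intro h
            exact absurd (Finset.mem_univ l) h
      _ = ∑ l, Rs l X Y := rfl
  · intro Rs' ⟨h1, h2⟩
    funext i
    apply LinearMap.ext
    intro X
    apply LinearMap.ext
    intro Y
    rw [hkey Rs' h1 h2 i X Y]
    rfl


end
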